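/- Let β > 0 and set Ω_0 = Ω_1 = Ω_2 = 2β and Ω_k = 0 for all integers k ≥ 3. For x ≥ 0 and integer k ≥ 1, define Ω_k^*(x) = Σ_{n≥1} ( Σ_{α∈ℕ^n, α_1+···+α_n = k} Π_{j=1}^n Ω_{α_j} ) · x^n/n!. Then Ω_k^*(x) ≤ Σ_{n ≥ ⌈k/2⌉} (6xβ)^n/n!, and consequently Ω_k^*(x) ≤ e^{6xβ}·(6xβ)^{⌈k/2⌉}/⌈k/2⌉!. -/
import Mathlib


/-- `Ω_0 = Ω_1 = Ω_2 = 2β` and `Ω_k = 0` for `k ≥ 3`. -/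
noncomputable def omegaCoef (β : ℝ) (k : ℕ) : ℝ := if k ≤ 2 then 2 * β else 0

/-- `Ω_k^*(x) = Σ_{n≥1} (Σ_{α∈ℕ^n, α_1+⋯+α_n=k} Π_j Ω_{α_j}) · x^n/n!`. -/
noncomputable def omegaStar (β : ℝ) (k : ℕ) (x : ℝ) : ℝ :=
  ∑' n : ℕ, if n = 0 then 0 else
    (∑ α ∈ Finset.Nat.antidiagonalTuple n k, ∏ j, omegaCoef β (α j)) *
      x ^ n / (n.factorial : ℝ)

lemma omegaCoef_nonneg (β : ℝ) (hβ : 0 < β) (i : ℕ) : 0 ≤ omegaCoef β i := by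
  unfold omegaCoef; split <;> positivity

lemma omegaCoef_sum_le (β : ℝ) (hβ : 0 < β) (n k : ℕ) :
    (∑ α ∈ Finset.Nat.antidiagonalTuple n k, ∏ j, omegaCoef β (α j)) ≤ (6 * β) ^ n := by
  classical
  set T : Finset (Fin n → ℕ) := Fintype.piFinset (fun _ : Fin n => Finset.range 3) with hT
  set A := Finset.Nat.antidiagonalTuple n k with hA
  have hzero : ∀ α ∈ A, α ∉ A ∩ T → (∏ j, omegaCoef β (α j)) = 0 := by
    intro α hα hαT
    have : α ∉ T := fun h => hαT (Finset.mem_inter.mpr ⟨hα, h⟩)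
    rw [Fintype.mem_piFinset] at this
    push_neg at this
    obtain ⟨j, hj⟩ := this
    have hj3 : ¬ (α j ≤ 2) := by
      intro h; exact hj (Finset.mem_range.mpr (by omega))
    exact Finset.prod_eq_zero (Finset.mem_univ j) (by simp [omegaCoef, hj3])
  have h1 : (∑ α ∈ A, ∏ j, omegaCoef β (α j)) = ∑ α ∈ A ∩ T, ∏ j, omegaCoef β (α j) :=
    (Finset.sum_subset Finset.inter_subset_left (fun α hα h => hzero α hα h)).symm
  have h2 : (∑ α ∈ A ∩ T, ∏ j, omegaCoef β (α j)) ≤ ∑ α ∈ T, ∏ j, omegaCoef β (α j) :=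
    Finset.sum_le_sum_of_subset_of_nonneg Finset.inter_subset_right
      (fun α _ _ => Finset.prod_nonneg fun j _ => omegaCoef_nonneg β hβ _)
  have h3 : (∑ α ∈ T, ∏ j, omegaCoef β (α j)) = (6 * β) ^ n := by
    rw [hT, ← Finset.prod_univ_sum]
    have : (∑ i ∈ Finset.range 3, omegaCoef β i) = 6 * β := by
      simp [Finset.sum_range_succ, omegaCoef]; ring
    rw [this, Finset.prod_const, Finset.card_univ, Fintype.card_fin]
  rw [h1]; rw [← h3]; exact h2

lemma omegaCoef_sum_eq_zero (β : ℝ) (n k : ℕ) (h : 2 * n < k) :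
    (∑ α ∈ Finset.Nat.antidiagonalTuple n k, ∏ j, omegaCoef β (α j)) = 0 := by
  apply Finset.sum_eq_zero
  intro α hα
  rw [Finset.Nat.mem_antidiagonalTuple] at hα
  by_contra hne
  have hall : ∀ j, α j ≤ 2 := by
    intro j
    by_contra hj
    exact hne (Finset.prod_eq_zero (Finset.mem_univ j) (by simp [omegaCoef, hj]))
  have : (∑ j, α j) ≤ ∑ _j : Fin n, 2 := Finset.sum_le_sum fun j _ => hall j
  simp only [Finset.sum_const, Finset.card_univ, Fintype.card_fin, smul_eq_mul] at this
  omega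

/-- `Ω_k^*(x) ≤ Σ_{n ≥ ⌈k/2⌉} (6xβ)^n/n!`, and consequently
`Ω_k^*(x) ≤ e^{6xβ}·(6xβ)^{⌈k/2⌉}/⌈k/2⌉!` (here `⌈k/2⌉ = (k+1)/2` as naturals). -/
theorem stmt16 (β : ℝ) (hβ : 0 < β) (x : ℝ) (hx : 0 ≤ x) (k : ℕ) (hk : 1 ≤ k) :
    omegaStar β k x ≤
      (∑' n : ℕ, if (k+1)/2 ≤ n then (6 * x * β) ^ n / (n.factorial : ℝ) else 0) ∧
    omegaStar β k x ≤
      Real.exp (6 * x * β) * (6 * x * β) ^ ((k+1)/2) / (((k+1)/2).factorial : ℝ) := by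
  classical
  have hy0 : (0:ℝ) ≤ 6 * x * β := by positivity
  set y := 6 * x * β with hydef
  set m := (k + 1) / 2 with hm
  set f : ℕ → ℝ := fun n => if n = 0 then 0 else
    (∑ α ∈ Finset.Nat.antidiagonalTuple n k, ∏ j, omegaCoef β (α j)) *
      x ^ n / (n.factorial : ℝ) with hfdef
  have homega : omegaStar β k x = ∑' n, f n := rfl
  set G : ℕ → ℝ := fun n => if m ≤ n then y ^ n / (n.factorial : ℝ) else 0 with hGdef
  have hf_nonneg : ∀ n, 0 ≤ f n := by
    intro n
    simp only [hfdef]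
    split
    · exact le_refl 0
    · apply div_nonneg _ (by positivity)
      apply mul_nonneg _ (by positivity)
      exact Finset.sum_nonneg fun α _ => Finset.prod_nonneg fun j _ => omegaCoef_nonneg β hβ _
  have hfG : ∀ n, f n ≤ G n := by
    intro n
    by_cases hmn : m ≤ n
    · simp only [hfdef, hGdef, hmn, if_true]
      split
      · positivity
      · rw [div_le_div_iff_of_pos_right (by positivity : (0:ℝ) < (n.factorial : ℝ))]
        calc (∑ α ∈ Finset.Nat.antidiagonalTuple n k, ∏ j, omegaCoef β (α j)) * x ^ n
            ≤ (6 * β) ^ n * x ^ n := by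
              apply mul_le_mul_of_nonneg_right (omegaCoef_sum_le β hβ n k) (by positivity)
          _ = y ^ n := by rw [hydef, ← mul_pow]; ring_nf
    · have h2n : 2 * n < k := by omega
      have := omegaCoef_sum_eq_zero β n k h2n
      simp only [hfdef, hGdef, hmn, if_false, this]
      split <;> simp
  have hG_nonneg : ∀ n, 0 ≤ G n := by
    intro n; simp only [hGdef]; split
    · positivity
    · exact le_refl 0
  have hGsum : Summable G := by
    apply Summable.of_nonneg_of_le hG_nonneg _ (Real.summable_pow_div_factorial y)
    intro n; simp only [hGdef]; split
    · exact le_refl _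
    · positivity
  have hfsum : Summable f := Summable.of_nonneg_of_le hf_nonneg hfG hGsum
  have h1 : omegaStar β k x ≤ ∑' n, G n := by
    rw [homega]; exact Summable.tsum_le_tsum hfG hfsum hGsum
  refine ⟨h1, h1.trans ?_⟩
  -- now show ∑' G ≤ exp y * y^m / m!
  set c : ℝ := y ^ m / (m.factorial : ℝ) with hcdef
  have hc0 : 0 ≤ c := by positivity
  set H : ℕ → ℝ := fun n => if m ≤ n then c * (y ^ (n - m) / ((n - m).factorial : ℝ)) else 0
    with hHdef
  have hGH : ∀ n, G n ≤ H n := by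
    intro n
    by_cases hmn : m ≤ n
    · simp only [hGdef, hHdef, hmn, if_true]
      have hfact : ((m.factorial * (n - m).factorial : ℕ) : ℝ) ≤ (n.factorial : ℝ) := by
        exact_mod_cast Nat.le_of_dvd n.factorial_pos
          (Nat.factorial_mul_factorial_dvd_factorial hmn)
      have hyn : y ^ n = y ^ m * y ^ (n - m) := by rw [← pow_add]; congr 1; omega
      rw [hcdef, div_mul_div_comm, ← hyn]
      apply div_le_div_of_nonneg_left (by positivity) (by positivity)
      · push_cast at hfact ⊢; linarith
    · simp [hGdef, hHdef, hmn]
  have hHcomp : ∀ j : ℕ, H (m + j) = c * (y ^ j / (j.factorial : ℝ)) := by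
    intro j
    have : m ≤ m + j := Nat.le_add_right m j
    simp only [hHdef, this, if_true, Nat.add_sub_cancel_left]
  have hinj : Function.Injective (fun j : ℕ => m + j) := fun a b h => by simpa using h
  have hsupp : Function.support H ⊆ Set.range (fun j : ℕ => m + j) := by
    intro n hn
    simp only [Function.mem_support, hHdef] at hn
    by_cases hmn : m ≤ n
    · exact ⟨n - m, by simp; omega⟩
    · simp [hmn] at hn
  have hHsum_comp : Summable (fun j => H (m + j)) := by
    simp only [hHcomp]
    exact ((Real.summable_pow_div_factorial y).mul_left c)
  have hHsum : Summable H := by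
    rwa [← Function.Injective.summable_iff hinj (fun n hn => by
      by_contra h; exact hn (hsupp (Function.mem_support.mpr h)))]
  have hHtsum : ∑' n, H n = c * Real.exp y := by
    rw [← Function.Injective.tsum_eq hinj hsupp]
    simp only [hHcomp]
    rw [tsum_mul_left]
    congr 1
    rw [Real.exp_eq_exp_ℝ, NormedSpace.exp_eq_tsum_div]
  calc ∑' n, G n ≤ ∑' n, H n := Summable.tsum_le_tsum hGH hGsum hHsum
    _ = c * Real.exp y := hHtsum
    _ = Real.exp y * y ^ m / (m.factorial : ℝ) := by rw [hcdef]; ring
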